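/- arXiv:math/0507258 — 2 statements merged into one kernel-verified Lean document; each statement's English description precedes it below -/
import Mathlib

section
/- limsup_{δ→0} limsup_{t→∞} (1/t)·log P(S_t ≤ δ) ≤ −r·P(ξ_1 > 0). -/
open MeasureTheory ProbabilityTheory Filter Real Set
open scoped ENNReal NNReal Topology

lemma expMGF {r : ℝ} (hr : 0 < r) {u : ℝ} (hu : u < r) :
    Integrable (fun x => Real.exp (u * x)) (expMeasure r) ∧
      ∫ x, Real.exp (u * x) ∂(expMeasure r) = r / (r - u) := by
  have hd : expMeasure r
      = volume.withDensity (fun x => ((exponentialPDFReal r x).toNNReal : ℝ≥0∞)) := rfl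
  have hmeas : Measurable (fun x => (exponentialPDFReal r x).toNNReal) :=
    (measurable_exponentialPDFReal r).real_toNNReal
  have hkey : (fun x : ℝ => (exponentialPDFReal r x).toNNReal • Real.exp (u * x))
      = Set.indicator (Ici (0:ℝ)) (fun x => r * Real.exp ((u - r) * x)) := by
    funext x
    simp only [NNReal.smul_def, smul_eq_mul, exponentialPDFReal, gammaPDFReal, Set.indicator]
    by_cases hx : (0:ℝ) ≤ x
    · simp only [hx, if_pos, mem_Ici]
      rw [Real.coe_toNNReal _ (by positivity)]
      rw [Real.Gamma_one]
      rw [show (u - r) * x = -(r*x) + u * x by ring, Real.exp_add]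
      ring_nf
      norm_num
    · simp [hx, mem_Ici]
  have h0 : 0 < r - u := by linarith
  have hind : IntegrableOn (fun x => r * Real.exp ((u - r) * x)) (Ici (0:ℝ)) := by
    rw [integrableOn_Ici_iff_integrableOn_Ioi]
    have := (exp_neg_integrableOn_Ioi 0 h0).const_mul r
    simpa [IntegrableOn, neg_mul, show ∀ x:ℝ, -(r-u)*x = (u-r)*x by intro x; ring] using this
  have hindic : Integrable
      (Set.indicator (Ici (0:ℝ)) (fun x => r * Real.exp ((u - r) * x))) volume := by
    rwa [integrable_indicator_iff measurableSet_Ici]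
  constructor
  · rw [hd, integrable_withDensity_iff_integrable_smul hmeas]
    simpa [hkey] using hindic
  · rw [hd, integral_withDensity_eq_integral_smul hmeas]
    rw [show ∀ g : ℝ → ℝ, ∫ x, (exponentialPDFReal r x).toNNReal • g x =
      ∫ x, ((fun y => (exponentialPDFReal r y).toNNReal • g y) x) from fun g => rfl]
    rw [show (fun x : ℝ => (exponentialPDFReal r x).toNNReal • Real.exp (u * x)) = _ from hkey]
    rw [integral_indicator measurableSet_Ici, integral_Ici_eq_integral_Ioi]
    rw [MeasureTheory.integral_const_mul]
    have hc : ∀ x : ℝ, Real.exp ((u-r) * x) = Real.exp (-((r-u) * x)) := by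
      intro x; ring_nf
    simp_rw [hc]
    have := integral_comp_mul_left_Ioi (fun x => Real.exp (-x)) 0 h0
    simp only [mul_zero, smul_eq_mul] at this
    rw [this, integral_exp_neg_Ioi_zero]
    field_simp

lemma tau_mgf
    {Ω : Type*} [MeasurableSpace Ω] {P : Measure Ω} [IsProbabilityMeasure P]
    {ξ σ : ℕ → Ω → ℝ} {r : ℝ} (hr : 0 < r)
    (hξmeas : ∀ i, Measurable (ξ i)) (hσmeas : ∀ i, Measurable (σ i))
    (hσexp : ∀ i, 1 ≤ i → P.map (σ i) = ProbabilityTheory.expMeasure r)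
    (hindep : iIndepFun (Sum.elim ξ σ) P)
    {u : ℝ} (hu : u < r) (m : ℕ) :
    Integrable (fun ω => Real.exp (u * ∑ i ∈ Finset.Icc 1 m, σ i ω)) P ∧
    mgf (fun ω => ∑ i ∈ Finset.Icc 1 m, σ i ω) P u = (r/(r-u))^m := by
  have hfmeas : ∀ i : ℕ ⊕ ℕ, Measurable (Sum.elim ξ σ i) := by
    rintro (i|i); exacts [hξmeas i, hσmeas i]
  set R : Finset (ℕ ⊕ ℕ) := (Finset.Icc 1 m).map ⟨Sum.inr, Sum.inr_injective⟩ with hR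
  have hrepr : (fun ω => ∑ i ∈ Finset.Icc 1 m, σ i ω) = (∑ i ∈ R, Sum.elim ξ σ i) := by
    funext ω
    rw [Finset.sum_apply, hR, Finset.sum_map]
    rfl
  have hint1 : ∀ i ∈ R, Integrable (fun ω => Real.exp (u * Sum.elim ξ σ i ω)) P := by
    intro i hi
    rw [hR, Finset.mem_map] at hi
    obtain ⟨n, hn, rfl⟩ := hi
    have hn1 : 1 ≤ n := (Finset.mem_Icc.1 hn).1
    have h1 : Integrable (fun x => Real.exp (u * x)) (P.map (σ n)) := by
      rw [hσexp n hn1]; exact (expMGF hr hu).1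
    rw [integrable_map_measure ((by fun_prop : Measurable fun x : ℝ => Real.exp (u * x))).aestronglyMeasurable
      (hσmeas n).aemeasurable] at h1
    exact h1
  have hmgf1 : ∀ n, 1 ≤ n → mgf (σ n) P u = r/(r-u) := by
    intro n hn1
    have h2 : ∫ x, Real.exp (u * x) ∂(P.map (σ n)) = r/(r-u) := by
      rw [hσexp n hn1]; exact (expMGF hr hu).2
    rw [integral_map (hσmeas n).aemeasurable
      ((by fun_prop : Measurable fun x : ℝ => Real.exp (u * x))).aestronglyMeasurable] at h2
    exact h2
  constructor
  · have := hindep.integrable_exp_mul_sum (t := u) hfmeas (s := R) hint1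
    rw [← hrepr] at this
    exact this
  · rw [hrepr, hindep.mgf_sum hfmeas R, hR, Finset.prod_map]
    simp only [Function.Embedding.coeFn_mk, Sum.elim_inr]
    have : ∀ n ∈ Finset.Icc 1 m, mgf (σ n) P u
        = r/(r-u) := fun n hn => hmgf1 n (Finset.mem_Icc.1 hn).1
    rw [Finset.prod_congr rfl this, Finset.prod_const, Nat.card_Icc]
    norm_num

lemma xi_mgf
    {Ω : Type*} [MeasurableSpace Ω] {P : Measure Ω} [IsProbabilityMeasure P]
    {ξ σ : ℕ → Ω → ℝ}
    (hξmeas : ∀ i, Measurable (ξ i)) (hσmeas : ∀ i, Measurable (σ i))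
    (hξnonneg : ∀ i ω, 0 ≤ ξ i ω)
    (hξident : ∀ i, 1 ≤ i → IdentDistrib (ξ i) (ξ 1) P P)
    (hindep : iIndepFun (Sum.elim ξ σ) P)
    {l : ℝ} (hl : 0 ≤ l) (m : ℕ) :
    Integrable (fun ω => Real.exp (-l * ∑ n ∈ Finset.Icc 1 m, ξ n ω)) P ∧
    mgf (fun ω => ∑ n ∈ Finset.Icc 1 m, ξ n ω) P (-l) = (mgf (ξ 1) P (-l))^m := by
  have hfmeas : ∀ i : ℕ ⊕ ℕ, Measurable (Sum.elim ξ σ i) := by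
    rintro (i|i); exacts [hξmeas i, hσmeas i]
  set L : Finset (ℕ ⊕ ℕ) := (Finset.Icc 1 m).map ⟨Sum.inl, Sum.inl_injective⟩ with hL
  have hrepr : (fun ω => ∑ n ∈ Finset.Icc 1 m, ξ n ω) = (∑ i ∈ L, Sum.elim ξ σ i) := by
    funext ω
    rw [Finset.sum_apply, hL, Finset.sum_map]
    rfl
  have hVmeas : Measurable (fun ω => ∑ n ∈ Finset.Icc 1 m, ξ n ω) :=
    Finset.measurable_sum _ (fun n _ => hξmeas n)
  constructor
  · refine Integrable.mono' (integrable_const 1)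
      ((Real.measurable_exp.comp (hVmeas.const_mul (-l))).aestronglyMeasurable) ?_
    filter_upwards with ω
    rw [Real.norm_eq_abs, abs_of_pos (Real.exp_pos _)]
    have hV : 0 ≤ ∑ n ∈ Finset.Icc 1 m, ξ n ω :=
      Finset.sum_nonneg fun n _ => hξnonneg n ω
    calc Real.exp (-l * ∑ n ∈ Finset.Icc 1 m, ξ n ω) ≤ Real.exp 0 :=
      Real.exp_le_exp.2 (by nlinarith)
    _ = 1 := Real.exp_zero
  · rw [hrepr, hindep.mgf_sum hfmeas L, hL, Finset.prod_map]
    simp only [Function.Embedding.coeFn_mk, Sum.elim_inl]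
    have : ∀ n ∈ Finset.Icc 1 m, mgf (ξ n) P (-l) = mgf (ξ 1) P (-l) := by
      intro n hn
      have hid := (hξident n (Finset.mem_Icc.1 hn).1).comp
        (u := fun x : ℝ => Real.exp (-l * x)) (by fun_prop)
      exact hid.integral_eq
    rw [Finset.prod_congr rfl this, Finset.prod_const, Nat.card_Icc]
    norm_num

lemma indep_tau_xi
    {Ω : Type*} [MeasurableSpace Ω] {P : Measure Ω} [IsProbabilityMeasure P]
    {ξ σ : ℕ → Ω → ℝ}
    (hξmeas : ∀ i, Measurable (ξ i)) (hσmeas : ∀ i, Measurable (σ i))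
    (hindep : iIndepFun (Sum.elim ξ σ) P)
    (k m : ℕ) :
    IndepFun (fun ω => ∑ i ∈ Finset.Icc 1 k, σ i ω)
      (fun ω => ∑ n ∈ Finset.Icc 1 m, ξ n ω) P := by
  have hfmeas : ∀ i : ℕ ⊕ ℕ, Measurable (Sum.elim ξ σ i) := by
    rintro (i|i); exacts [hξmeas i, hσmeas i]
  set S : Finset (ℕ ⊕ ℕ) := (Finset.Icc 1 k).map ⟨Sum.inr, Sum.inr_injective⟩ with hS
  set T : Finset (ℕ ⊕ ℕ) := (Finset.Icc 1 m).map ⟨Sum.inl, Sum.inl_injective⟩ with hT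
  have hdisj : Disjoint S T := by
    rw [Finset.disjoint_left]
    rintro ⟨a⟩ ha hb
    · rw [hS, Finset.mem_map] at ha; obtain ⟨n, _, h⟩ := ha; simp at h
    · rw [hT, Finset.mem_map] at hb; obtain ⟨n, _, h⟩ := hb; simp at h
  have h := hindep.indepFun_finset S T hdisj hfmeas
  have h2 := h.comp (φ := fun v : (i : S) → ℝ => ∑ i, v i)
    (ψ := fun v : (i : T) → ℝ => ∑ i, v i)
    (Finset.measurable_sum _ fun i _ => measurable_pi_apply i)
    (Finset.measurable_sum _ fun i _ => measurable_pi_apply i)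
  have e1 : ((fun v : (i : S) → ℝ => ∑ i, v i) ∘ (fun a (i : S) => Sum.elim ξ σ i a))
      = fun ω => ∑ i ∈ Finset.Icc 1 k, σ i ω := by
    funext ω
    simp only [Function.comp_apply]
    rw [Finset.sum_coe_sort S (fun i => Sum.elim ξ σ i ω), hS, Finset.sum_map]
    rfl
  have e2 : ((fun v : (i : T) → ℝ => ∑ i, v i) ∘ (fun a (i : T) => Sum.elim ξ σ i a))
      = fun ω => ∑ n ∈ Finset.Icc 1 m, ξ n ω := by
    funext ω
    simp only [Function.comp_apply]
    rw [Finset.sum_coe_sort T (fun i => Sum.elim ξ σ i ω), hT, Finset.sum_map]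
    rfl
  rwa [e1, e2] at h2

lemma incl_lemma
    {Ω : Type*} (ξ σ : ℕ → Ω → ℝ)
    (hξnonneg : ∀ i ω, 0 ≤ ξ i ω)
    (τ : ℕ → Ω → ℝ)
    (hτ : τ = fun (n : ℕ) (ω : Ω) => ∑ i ∈ Finset.Icc 1 n, σ i ω)
    (S : ℝ → Ω → ℝ)
    (hS : S = fun (t : ℝ) (ω : Ω) =>
      (1 / t) * ∑' n : ℕ, if 1 ≤ n ∧ τ n ω ≤ t then ξ n ω else 0)
    {t δ : ℝ} (ht : 0 < t) :
    {ω | S t ω ≤ δ} ⊆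
      (⋃ n : ℕ, {ω | σ (n+1) ω < 0}) ∪ (⋂ m : ℕ, {ω | τ m ω ≤ t}) ∪
      ⋃ m : ℕ, ({ω | t < τ (m+1) ω} ∩ {ω | ∑ n ∈ Finset.Icc 1 m, ξ n ω ≤ δ * t}) := by
  intro ω hω
  by_cases hσ : ∃ n : ℕ, σ (n+1) ω < 0
  · obtain ⟨n, hn⟩ := hσ
    exact Or.inl (Or.inl (mem_iUnion.2 ⟨n, hn⟩))
  push_neg at hσ
  by_cases hall : ∀ m : ℕ, τ m ω ≤ t
  · exact Or.inl (Or.inr (mem_iInter.2 hall))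
  push_neg at hall
  refine Or.inr ?_
  have hσ' : ∀ n : ℕ, 1 ≤ n → 0 ≤ σ n ω := by
    intro n hn
    obtain ⟨k, rfl⟩ := Nat.exists_eq_add_of_le' hn
    exact hσ k
  have hmono : Monotone (fun m => τ m ω) := by
    apply monotone_nat_of_le_succ
    intro m
    simp only [hτ]
    rw [Finset.sum_Icc_succ_top (by omega : 1 ≤ m + 1)]
    have := hσ' (m+1) (by omega)
    linarith
  have hEx : ∃ m : ℕ, t < τ m ω := hall
  classical
  set m₀ := Nat.find hEx with hm₀def
  have hm₀ : t < τ m₀ ω := Nat.find_spec hEx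
  have hmin : ∀ j, j < m₀ → τ j ω ≤ t := by
    intro j hj
    have := Nat.find_min hEx hj
    linarith [not_lt.1 this]
  have hτ0 : τ 0 ω = 0 := by simp [hτ]
  have hm₀pos : 1 ≤ m₀ := by
    rcases Nat.eq_zero_or_pos m₀ with h | h
    · rw [h] at hm₀; rw [hτ0] at hm₀; linarith
    · exact h
  set m := m₀ - 1 with hmdef
  have hm1 : m + 1 = m₀ := by omega
  refine mem_iUnion.2 ⟨m, ?_, ?_⟩
  · show t < τ (m+1) ω
    rw [hm1]; exact hm₀
  · show ∑ n ∈ Finset.Icc 1 m, ξ n ω ≤ δ * t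
    have hcond : ∀ n : ℕ, (1 ≤ n ∧ τ n ω ≤ t) ↔ n ∈ Finset.Icc 1 m := by
      intro n
      rw [Finset.mem_Icc]
      constructor
      · rintro ⟨h1, h2⟩
        refine ⟨h1, ?_⟩
        by_contra hc
        have : m + 1 ≤ n := by omega
        have := hmono this
        rw [hm1] at this
        simp only at this
        linarith
      · rintro ⟨h1, h2⟩
        exact ⟨h1, le_trans (hmono h2) (hmin m (by omega))⟩
    have htsum : (∑' n : ℕ, if 1 ≤ n ∧ τ n ω ≤ t then ξ n ω else 0)
        = ∑ n ∈ Finset.Icc 1 m, ξ n ω := by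
      rw [tsum_eq_sum (s := Finset.Icc 1 m) ?_]
      · refine Finset.sum_congr rfl fun n hn => ?_
        rw [if_pos ((hcond n).2 hn)]
      · intro n hn
        rw [if_neg (fun hc => hn ((hcond n).1 hc))]
    have hω' : (1 / t) * (∑ n ∈ Finset.Icc 1 m, ξ n ω) ≤ δ := by
      have := hω
      rw [hS] at this
      simp only [Set.mem_setOf_eq] at this
      rwa [htsum] at this
    have h2 := mul_le_mul_of_nonneg_left hω' ht.le
    rw [← mul_assoc, mul_one_div_cancel ht.ne', one_mul] at h2
    linarith

lemma sigma_neg_null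
    {Ω : Type*} [MeasurableSpace Ω] {P : Measure Ω} [IsProbabilityMeasure P]
    {σ : ℕ → Ω → ℝ} {r : ℝ} (hr : 0 < r)
    (hσmeas : ∀ i, Measurable (σ i))
    (hσexp : ∀ i, 1 ≤ i → P.map (σ i) = ProbabilityTheory.expMeasure r) :
    P (⋃ n : ℕ, {ω | σ (n+1) ω < 0}) = 0 := by
  refine measure_iUnion_null fun n => ?_
  have h1 : {ω | σ (n+1) ω < 0} = σ (n+1) ⁻¹' (Iio 0) := rfl
  rw [h1, ← Measure.map_apply (hσmeas (n+1)) measurableSet_Iio, hσexp (n+1) (by omega)]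
  have : expMeasure r = volume.withDensity (exponentialPDF r) := rfl
  rw [this, withDensity_apply _ measurableSet_Iio]
  exact lintegral_exponentialPDF_of_nonpos le_rfl

lemma tau_all_le_null
    {Ω : Type*} [MeasurableSpace Ω] {P : Measure Ω} [IsProbabilityMeasure P]
    {ξ σ : ℕ → Ω → ℝ} {r : ℝ} (hr : 0 < r)
    (hξmeas : ∀ i, Measurable (ξ i)) (hσmeas : ∀ i, Measurable (σ i))
    (hσexp : ∀ i, 1 ≤ i → P.map (σ i) = ProbabilityTheory.expMeasure r)
    (hindep : iIndepFun (Sum.elim ξ σ) P)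
    (τ : ℕ → Ω → ℝ)
    (hτ : τ = fun (n : ℕ) (ω : Ω) => ∑ i ∈ Finset.Icc 1 n, σ i ω)
    (t : ℝ) :
    P (⋂ m : ℕ, {ω | τ m ω ≤ t}) = 0 := by
  have hu : -r < r := by linarith
  have hbound : ∀ m : ℕ, P (⋂ k : ℕ, {ω | τ k ω ≤ t})
      ≤ ENNReal.ofReal (Real.exp (r * t) * (1/2)^m) := by
    intro m
    have ⟨hint, hmgf⟩ := tau_mgf hr hξmeas hσmeas hσexp hindep hu m
    have hch := measure_le_le_exp_mul_mgf (X := fun ω => ∑ i ∈ Finset.Icc 1 m, σ i ω)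
      (μ := P) t (by linarith : -r ≤ 0) hint
    rw [hmgf] at hch
    have heq : (r / (r - -r)) = (1/2 : ℝ) := by
      field_simp
      ring
    rw [heq] at hch
    have h2 : P (⋂ k : ℕ, {ω | τ k ω ≤ t}) ≤ P {ω | (∑ i ∈ Finset.Icc 1 m, σ i ω) ≤ t} := by
      refine measure_mono fun ω hω => ?_
      have := mem_iInter.1 hω m
      simpa [hτ] using this
    refine h2.trans ?_
    rw [← ENNReal.ofReal_toReal (measure_ne_top P _)]
    refine ENNReal.ofReal_le_ofReal ?_
    calc (P {ω | (∑ i ∈ Finset.Icc 1 m, σ i ω) ≤ t}).toReal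
        ≤ Real.exp (-(-r) * t) * (1/2)^m := hch
      _ = Real.exp (r * t) * (1/2)^m := by norm_num
  have htend : Tendsto (fun m : ℕ => ENNReal.ofReal (Real.exp (r * t) * (1/2)^m))
      atTop (nhds 0) := by
    rw [show (0 : ℝ≥0∞) = ENNReal.ofReal 0 by simp]
    refine ENNReal.tendsto_ofReal ?_
    rw [show (0:ℝ) = Real.exp (r*t) * 0 by ring]
    exact (tendsto_pow_atTop_nhds_zero_of_lt_one (by norm_num) (by norm_num)).const_mul _
  have := ge_of_tendsto' htend hbound
  exact le_antisymm this (by simp)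

lemma main_bound
    {Ω : Type*} [MeasurableSpace Ω] {P : Measure Ω} [IsProbabilityMeasure P]
    {ξ σ : ℕ → Ω → ℝ} {r : ℝ} (hr : 0 < r)
    (hξmeas : ∀ i, Measurable (ξ i)) (hσmeas : ∀ i, Measurable (σ i))
    (hξnonneg : ∀ i ω, 0 ≤ ξ i ω)
    (hξident : ∀ i, 1 ≤ i → IdentDistrib (ξ i) (ξ 1) P P)
    (hσexp : ∀ i, 1 ≤ i → P.map (σ i) = ProbabilityTheory.expMeasure r)
    (hindep : iIndepFun (Sum.elim ξ σ) P)
    (τ : ℕ → Ω → ℝ)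
    (hτ : τ = fun (n : ℕ) (ω : Ω) => ∑ i ∈ Finset.Icc 1 n, σ i ω)
    (S : ℝ → Ω → ℝ)
    (hS : S = fun (t : ℝ) (ω : Ω) =>
      (1 / t) * ∑' n : ℕ, if 1 ≤ n ∧ τ n ω ≤ t then ξ n ω else 0)
    {l θ δ t : ℝ} (hl : 0 < l) (hθ : 0 < θ) (hθr : θ < r)
    (hρ : (r/(r-θ)) * mgf (ξ 1) P (-l) < 1) (ht : 0 < t) :
    P {ω | S t ω ≤ δ} ≤ ENNReal.ofReal
      ((r/(r-θ)) * (1 - (r/(r-θ)) * mgf (ξ 1) P (-l))⁻¹ * Real.exp ((l*δ - θ)*t)) := by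
  set M : ℝ := r/(r-θ) with hM
  set φ : ℝ := mgf (ξ 1) P (-l) with hφ
  have hM0 : 0 < M := by
    rw [hM]; exact div_pos hr (by linarith)
  have hφ0 : 0 ≤ φ := mgf_nonneg
  have hρ0 : 0 ≤ M * φ := by positivity
  -- step 1 : measure bound via inclusion
  have step1 : P {ω | S t ω ≤ δ} ≤
      ∑' m : ℕ, P ({ω | t < τ (m+1) ω} ∩ {ω | ∑ n ∈ Finset.Icc 1 m, ξ n ω ≤ δ * t}) := by
    calc P {ω | S t ω ≤ δ}
        ≤ P ((⋃ n : ℕ, {ω | σ (n+1) ω < 0}) ∪ (⋂ m : ℕ, {ω | τ m ω ≤ t}) ∪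
          ⋃ m : ℕ, ({ω | t < τ (m+1) ω} ∩ {ω | ∑ n ∈ Finset.Icc 1 m, ξ n ω ≤ δ * t})) :=
          measure_mono (incl_lemma ξ σ hξnonneg τ hτ S hS ht)
      _ ≤ P ((⋃ n : ℕ, {ω | σ (n+1) ω < 0}) ∪ (⋂ m : ℕ, {ω | τ m ω ≤ t})) +
          P (⋃ m : ℕ, ({ω | t < τ (m+1) ω} ∩ {ω | ∑ n ∈ Finset.Icc 1 m, ξ n ω ≤ δ * t})) :=
          measure_union_le _ _
      _ ≤ 0 + P (⋃ m : ℕ, ({ω | t < τ (m+1) ω} ∩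
            {ω | ∑ n ∈ Finset.Icc 1 m, ξ n ω ≤ δ * t})) := by
          gcongr
          refine le_trans (measure_union_le _ _) ?_
          rw [sigma_neg_null hr hσmeas hσexp,
            tau_all_le_null hr hξmeas hσmeas hσexp hindep τ hτ t]
          simp
      _ = P (⋃ m : ℕ, ({ω | t < τ (m+1) ω} ∩
            {ω | ∑ n ∈ Finset.Icc 1 m, ξ n ω ≤ δ * t})) := by rw [zero_add]
      _ ≤ ∑' m : ℕ, P ({ω | t < τ (m+1) ω} ∩
            {ω | ∑ n ∈ Finset.Icc 1 m, ξ n ω ≤ δ * t}) := measure_iUnion_le _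
  -- step 2 : per-term bound
  have step2 : ∀ m : ℕ, P ({ω | t < τ (m+1) ω} ∩ {ω | ∑ n ∈ Finset.Icc 1 m, ξ n ω ≤ δ * t})
      ≤ ENNReal.ofReal ((Real.exp (-θ*t) * M^(m+1)) * (Real.exp (l*(δ*t)) * φ^m)) := by
    intro m
    have hprod : P ({ω | t < τ (m+1) ω} ∩ {ω | ∑ n ∈ Finset.Icc 1 m, ξ n ω ≤ δ * t})
        = P {ω | t < τ (m+1) ω} * P {ω | ∑ n ∈ Finset.Icc 1 m, ξ n ω ≤ δ * t} := by
      have hi := indep_tau_xi hξmeas hσmeas hindep (m+1) m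
      have h1 : {ω | t < τ (m+1) ω}
          = (fun ω => ∑ i ∈ Finset.Icc 1 (m+1), σ i ω) ⁻¹' (Ioi t) := by
        rw [hτ]; rfl
      have h2 : {ω | ∑ n ∈ Finset.Icc 1 m, ξ n ω ≤ δ * t}
          = (fun ω => ∑ n ∈ Finset.Icc 1 m, ξ n ω) ⁻¹' (Iic (δ*t)) := rfl
      rw [h1, h2]
      exact hi.measure_inter_preimage_eq_mul _ _ measurableSet_Ioi measurableSet_Iic
    rw [hprod]
    have hb1 : P {ω | t < τ (m+1) ω} ≤ ENNReal.ofReal (Real.exp (-θ*t) * M^(m+1)) := by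
      have ⟨hint, hmgf⟩ := tau_mgf hr hξmeas hσmeas hσexp hindep hθr (m+1)
      have hch := measure_ge_le_exp_mul_mgf (X := fun ω => ∑ i ∈ Finset.Icc 1 (m+1), σ i ω)
        (μ := P) t hθ.le hint
      rw [hmgf] at hch
      have hsub : {ω | t < τ (m+1) ω} ⊆ {ω | t ≤ (fun ω => ∑ i ∈ Finset.Icc 1 (m+1), σ i ω) ω} := by
        intro ω hω
        simp only [Set.mem_setOf_eq] at hω ⊢
        rw [hτ] at hω
        exact le_of_lt hω
      refine le_trans (measure_mono hsub) ?_
      rw [← ENNReal.ofReal_toReal (measure_ne_top P _)]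
      exact ENNReal.ofReal_le_ofReal hch
    have hb2 : P {ω | ∑ n ∈ Finset.Icc 1 m, ξ n ω ≤ δ * t}
        ≤ ENNReal.ofReal (Real.exp (l*(δ*t)) * φ^m) := by
      have ⟨hint, hmgf⟩ := xi_mgf hξmeas hσmeas hξnonneg hξident hindep hl.le m
      have hch := measure_le_le_exp_mul_mgf (X := fun ω => ∑ n ∈ Finset.Icc 1 m, ξ n ω)
        (μ := P) (δ*t) (by linarith : -l ≤ 0) hint
      rw [hmgf] at hch
      rw [← ENNReal.ofReal_toReal (measure_ne_top P _)]
      refine ENNReal.ofReal_le_ofReal ?_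
      calc (P {ω | (∑ n ∈ Finset.Icc 1 m, ξ n ω) ≤ δ*t}).toReal
          ≤ Real.exp (-(-l)*(δ*t)) * φ^m := hch
        _ = Real.exp (l*(δ*t)) * φ^m := by norm_num
    calc P {ω | t < τ (m+1) ω} * P {ω | ∑ n ∈ Finset.Icc 1 m, ξ n ω ≤ δ * t}
        ≤ ENNReal.ofReal (Real.exp (-θ*t) * M^(m+1)) * ENNReal.ofReal (Real.exp (l*(δ*t)) * φ^m) :=
          mul_le_mul' hb1 hb2
      _ = ENNReal.ofReal ((Real.exp (-θ*t) * M^(m+1)) * (Real.exp (l*(δ*t)) * φ^m)) := by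
          rw [← ENNReal.ofReal_mul (by positivity)]
  -- step 3 : sum the geometric series
  set K : ℝ := Real.exp (-θ*t) * M * Real.exp (l*(δ*t)) with hK
  have hK0 : 0 ≤ K := by positivity
  have hterm : ∀ m : ℕ, (Real.exp (-θ*t) * M^(m+1)) * (Real.exp (l*(δ*t)) * φ^m)
      = K * (M*φ)^m := by
    intro m
    rw [hK, mul_pow, pow_succ]
    ring
  have step3 : ∑' m : ℕ, P ({ω | t < τ (m+1) ω} ∩ {ω | ∑ n ∈ Finset.Icc 1 m, ξ n ω ≤ δ * t})
      ≤ ENNReal.ofReal K * (1 - ENNReal.ofReal (M*φ))⁻¹ := by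
    calc ∑' m : ℕ, P ({ω | t < τ (m+1) ω} ∩ {ω | ∑ n ∈ Finset.Icc 1 m, ξ n ω ≤ δ * t})
        ≤ ∑' m : ℕ, ENNReal.ofReal ((Real.exp (-θ*t) * M^(m+1)) * (Real.exp (l*(δ*t)) * φ^m)) :=
          ENNReal.tsum_le_tsum step2
      _ = ∑' m : ℕ, ENNReal.ofReal K * (ENNReal.ofReal (M*φ))^m := by
          refine tsum_congr fun m => ?_
          rw [hterm m, ENNReal.ofReal_mul hK0, ENNReal.ofReal_pow hρ0]
      _ = ENNReal.ofReal K * ∑' m : ℕ, (ENNReal.ofReal (M*φ))^m := ENNReal.tsum_mul_left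
      _ = ENNReal.ofReal K * (1 - ENNReal.ofReal (M*φ))⁻¹ := by
          rw [ENNReal.tsum_geometric]
  refine le_trans step1 (le_trans step3 ?_)
  have hone : (1 : ℝ≥0∞) - ENNReal.ofReal (M*φ) = ENNReal.ofReal (1 - M*φ) := by
    rw [ENNReal.ofReal_sub _ hρ0, ENNReal.ofReal_one]
  rw [hone, ← ENNReal.ofReal_inv_of_pos (by linarith), ← ENNReal.ofReal_mul hK0]
  refine ENNReal.ofReal_le_ofReal (le_of_eq ?_)
  rw [hK]
  rw [show (l*δ - θ)*t = -θ*t + l*(δ*t) by ring, Real.exp_add]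
  ring

lemma limsup_le_of_le_coe {α : Type*} {F : Filter α} [F.NeBot] {f : α → EReal} {g : α → ℝ} {L : ℝ}
    (h : ∀ᶠ x in F, f x ≤ (g x : EReal)) (hg : Tendsto g F (nhds L)) :
    Filter.limsup f F ≤ (L : EReal) := by
  have h2 : Tendsto (fun x => (g x : EReal)) F (nhds (L : EReal)) :=
    (continuous_coe_real_ereal.tendsto L).comp hg
  calc limsup f F ≤ limsup (fun x => (g x : EReal)) F := limsup_le_limsup h
    _ = (L : EReal) := h2.limsup_eq

lemma scale_log_bound {A : ℝ≥0∞} (hA : A ≠ ⊤) {t C b : ℝ} (ht : 0 < t) (hC : 0 < C)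
    (h : A ≤ ENNReal.ofReal (C * Real.exp (b*t))) :
    ((1/t : ℝ) : EReal) * ENNReal.log A ≤ ((Real.log C * (1/t) + b : ℝ) : EReal) := by
  rcases eq_or_ne A 0 with h0 | h0
  · rw [h0, ENNReal.log_zero, EReal.coe_mul_bot_of_pos (by positivity)]
    exact bot_le
  · have hAtop : 0 < A.toReal := ENNReal.toReal_pos h0 hA
    rw [ENNReal.log_pos_real' hAtop, ← EReal.coe_mul, EReal.coe_le_coe_iff]
    have h1 : A.toReal ≤ C * Real.exp (b*t) := by
      rw [← ENNReal.toReal_ofReal (by positivity : (0:ℝ) ≤ C * Real.exp (b*t))]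
      exact ENNReal.toReal_mono (by simp [ENNReal.ofReal_ne_top]) h
    have h2 : Real.log A.toReal ≤ Real.log C + b * t := by
      calc Real.log A.toReal ≤ Real.log (C * Real.exp (b*t)) :=
            Real.log_le_log hAtop h1
        _ = Real.log C + b * t := by rw [Real.log_mul hC.ne' (Real.exp_pos _).ne',
            Real.log_exp]
    calc (1/t) * Real.log A.toReal ≤ (1/t) * (Real.log C + b * t) := by
          apply mul_le_mul_of_nonneg_left h2 (by positivity)
      _ = Real.log C * (1/t) + b := by field_simp

lemma phi_tendsto
    {Ω : Type*} [MeasurableSpace Ω] {P : Measure Ω} [IsProbabilityMeasure P]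
    {ξ : ℕ → Ω → ℝ}
    (hξmeas : ∀ i, Measurable (ξ i))
    (hξnonneg : ∀ i ω, 0 ≤ ξ i ω) :
    Tendsto (fun n : ℕ => mgf (ξ 1) P (-((n:ℝ)+1))) atTop
      (nhds (1 - (P {ω | 0 < ξ 1 ω}).toReal)) := by
  have hmeas0 : MeasurableSet {ω | ξ 1 ω = 0} := (hξmeas 1) (measurableSet_singleton 0)
  have hlim : (1 : ℝ) - (P {ω | 0 < ξ 1 ω}).toReal
      = ∫ ω, Set.indicator {ω | ξ 1 ω = 0} (fun _ => (1:ℝ)) ω ∂P := by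
    rw [MeasureTheory.integral_indicator_const (1:ℝ) hmeas0]
    have hcompl : {ω | ξ 1 ω = 0} = {ω | 0 < ξ 1 ω}ᶜ := by
      ext ω
      simp only [Set.mem_setOf_eq, Set.mem_compl_iff, not_lt]
      constructor
      · intro h; rw [h]
      · intro h; exact le_antisymm h (hξnonneg 1 ω)
    rw [hcompl, measureReal_def, prob_compl_eq_one_sub (measurableSet_lt measurable_const (hξmeas 1))]
    rw [ENNReal.toReal_sub_of_le prob_le_one ENNReal.one_ne_top]
    simp
  rw [hlim]
  have hF : ∀ n : ℕ, AEStronglyMeasurable (fun ω => Real.exp (-((n:ℝ)+1) * ξ 1 ω)) P :=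
    fun n => (Real.measurable_exp.comp ((hξmeas 1).const_mul _)).aestronglyMeasurable
  refine tendsto_integral_of_dominated_convergence (fun _ => (1:ℝ)) hF
    (integrable_const 1) (fun n => ?_) ?_
  · filter_upwards with ω
    rw [Real.norm_eq_abs, abs_of_pos (Real.exp_pos _)]
    have := hξnonneg 1 ω
    calc Real.exp (-((n:ℝ)+1) * ξ 1 ω) ≤ Real.exp 0 := by
          apply Real.exp_le_exp.2; nlinarith
      _ = 1 := Real.exp_zero
  · filter_upwards with ω
    rcases eq_or_lt_of_le (hξnonneg 1 ω) with h0 | hpos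
    · have : ∀ n : ℕ, Real.exp (-((n:ℝ)+1) * ξ 1 ω) = 1 := by
        intro n; rw [← h0]; simp
      simp only [this]
      have : Set.indicator {ω | ξ 1 ω = 0} (fun _ => (1:ℝ)) ω = 1 := by
        rw [Set.indicator_of_mem]; exact h0.symm
      rw [this]
      exact tendsto_const_nhds
    · have hind : Set.indicator {ω | ξ 1 ω = 0} (fun _ => (1:ℝ)) ω = 0 := by
        rw [Set.indicator_of_notMem]
        simp only [Set.mem_setOf_eq]
        exact ne_of_gt hpos
      rw [hind]
      have h1 : Tendsto (fun n : ℕ => ((n:ℝ)+1)) atTop atTop :=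
        tendsto_atTop_add_const_right _ 1 tendsto_natCast_atTop_atTop
      have h2 : Tendsto (fun n : ℕ => ((n:ℝ)+1) * ξ 1 ω) atTop atTop :=
        h1.atTop_mul_const hpos
      have h3 : Tendsto (fun n : ℕ => -(((n:ℝ)+1) * ξ 1 ω)) atTop atBot :=
        tendsto_neg_atBot_iff.2 h2
      have h4 := Real.tendsto_exp_atBot.comp h3
      have he : (Real.exp ∘ fun n : ℕ => -(((n:ℝ)+1) * ξ 1 ω))
          = fun n : ℕ => Real.exp (-((n:ℝ)+1) * ξ 1 ω) := by
        funext n; simp only [Function.comp]; ring_nf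
      rwa [he] at h4

/-- **Upper bound at zero for the compound Poisson family `(S t)`:**
`limsup_{δ → 0⁺} limsup_{t → ∞} (1/t) log P(S t ≤ δ) ≤ -r P(ξ₁ > 0)`. -/
theorem compoundPoisson_upper_bound_zero
    {Ω : Type*} [MeasurableSpace Ω] (P : Measure Ω) [IsProbabilityMeasure P]
    (ξ σ : ℕ → Ω → ℝ) (r : ℝ) (hr : 0 < r)
    (hξmeas : ∀ i, Measurable (ξ i))
    (hσmeas : ∀ i, Measurable (σ i))
    (hξnonneg : ∀ i ω, 0 ≤ ξ i ω)
    (hξident : ∀ i, 1 ≤ i → IdentDistrib (ξ i) (ξ 1) P P)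
    (hσexp : ∀ i, 1 ≤ i → P.map (σ i) = ProbabilityTheory.expMeasure r)
    (hindep : iIndepFun (Sum.elim ξ σ) P)
    (τ : ℕ → Ω → ℝ)
    (hτ : τ = fun (n : ℕ) (ω : Ω) => ∑ i ∈ Finset.Icc 1 n, σ i ω)
    (S : ℝ → Ω → ℝ)
    (hS : S = fun (t : ℝ) (ω : Ω) =>
      (1 / t) * ∑' n : ℕ, if 1 ≤ n ∧ τ n ω ≤ t then ξ n ω else 0)
    (Λ : EReal)
    (hΛdef : Λ = sInf {x : EReal |
      ∃ l : ℝ, x = (l : EReal) ∧ 0 < l ∧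
        ¬ Integrable (fun ω => Real.exp (l * ξ 1 ω)) P})
    (hΛpos : 0 < Λ)
    (hfin : ∀ l : ℝ, (l : EReal) < Λ →
      Integrable (fun ω => Real.exp (l * ξ 1 ω)) P)
    :
    Filter.limsup
      (fun δ : ℝ => Filter.limsup
        (fun t : ℝ => ((1 / t : ℝ) : EReal) *
          ENNReal.log (P {ω | S t ω ≤ δ})) atTop)
      (nhdsWithin 0 (Ioi 0)) ≤
      ((-(r * (P {ω | 0 < ξ 1 ω}).toReal) : ℝ) : EReal) := by
  set LHSout := Filter.limsup
      (fun δ : ℝ => Filter.limsup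
        (fun t : ℝ => ((1 / t : ℝ) : EReal) *
          ENNReal.log (P {ω | S t ω ≤ δ})) atTop)
      (nhdsWithin 0 (Ioi 0)) with hLHS
  -- trivial bounds
  have trivial_inner : ∀ δ : ℝ,
      Filter.limsup (fun t : ℝ => ((1 / t : ℝ) : EReal) *
        ENNReal.log (P {ω | S t ω ≤ δ})) atTop ≤ ((0:ℝ) : EReal) := by
    intro δ
    refine limsup_le_of_le_coe (g := fun _ => (0:ℝ)) ?_ tendsto_const_nhds
    filter_upwards [eventually_gt_atTop (0:ℝ)] with t ht
    have hb : P {ω | S t ω ≤ δ} ≤ ENNReal.ofReal (1 * Real.exp (0 * t)) := by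
      simp only [one_mul, zero_mul, Real.exp_zero, ENNReal.ofReal_one]
      exact prob_le_one
    have := scale_log_bound (measure_ne_top P _) ht one_pos hb
    simpa using this
  have trivial_outer : LHSout ≤ ((0:ℝ) : EReal) := by
    rw [hLHS]
    exact limsup_le_of_le_coe (Eventually.of_forall trivial_inner) tendsto_const_nhds
  -- key bound for admissible (l, θ)
  have key : ∀ l : ℝ, 0 < l → ∀ θ : ℝ, 0 < θ → θ < r →
      (r/(r-θ)) * mgf (ξ 1) P (-l) < 1 → LHSout ≤ ((-θ : ℝ) : EReal) := by
    intro l hl θ hθ hθr hρ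
    set C : ℝ := (r/(r-θ)) * (1 - (r/(r-θ)) * mgf (ξ 1) P (-l))⁻¹ with hC
    have hM0 : 0 < r/(r-θ) := div_pos hr (by linarith)
    have hρ0 : 0 ≤ (r/(r-θ)) * mgf (ξ 1) P (-l) := mul_nonneg hM0.le mgf_nonneg
    have hC0 : 0 < C := by
      rw [hC]
      exact mul_pos hM0 (inv_pos.2 (by linarith))
    have inner : ∀ δ : ℝ, 0 < δ →
        Filter.limsup (fun t : ℝ => ((1 / t : ℝ) : EReal) *
          ENNReal.log (P {ω | S t ω ≤ δ})) atTop ≤ ((l*δ - θ : ℝ) : EReal) := by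
      intro δ hδ
      have htend : Tendsto (fun t : ℝ => Real.log C * (1/t) + (l*δ - θ)) atTop
          (nhds (l*δ - θ)) := by
        have h1 : Tendsto (fun t : ℝ => Real.log C * (1/t)) atTop (nhds 0) := by
          simpa using (tendsto_inv_atTop_zero (𝕜 := ℝ)).const_mul (Real.log C)
        simpa using h1.add_const (l*δ - θ)
      refine limsup_le_of_le_coe ?_ htend
      filter_upwards [eventually_gt_atTop (0:ℝ)] with t ht
      exact scale_log_bound (measure_ne_top P _) ht hC0
        (main_bound hr hξmeas hσmeas hξnonneg hξident hσexp hindep τ hτ S hS hl hθ hθr hρ ht)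
    rw [hLHS]
    have houter_tend : Tendsto (fun δ : ℝ => l*δ - θ) (nhdsWithin 0 (Ioi 0)) (nhds (-θ)) := by
      have hc : Continuous (fun δ : ℝ => l*δ - θ) := by continuity
      have := (hc.tendsto 0).mono_left (nhdsWithin_le_nhds (s := Ioi (0:ℝ)))
      simpa using this
    refine limsup_le_of_le_coe ?_ houter_tend
    filter_upwards [self_mem_nhdsWithin] with δ hδ
    exact inner δ hδ
  -- step over θ : for every l > 0
  have theta_step : ∀ l : ℝ, 0 < l →
      LHSout ≤ ((-(r * (1 - mgf (ξ 1) P (-l))) : ℝ) : EReal) := by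
    intro l hl
    set φl : ℝ := mgf (ξ 1) P (-l) with hφl
    have hφ0 : 0 ≤ φl := mgf_nonneg
    have hφ1 : φl ≤ 1 := by
      have hint := (xi_mgf hξmeas hσmeas hξnonneg hξident hindep hl.le 1).1
      have hsum : (fun ω => ∑ n ∈ Finset.Icc 1 1, ξ n ω) = ξ 1 := by
        funext ω; simp
      rw [hφl]
      have : mgf (ξ 1) P (-l) = ∫ ω, Real.exp (-l * ξ 1 ω) ∂P := rfl
      rw [this]
      calc ∫ ω, Real.exp (-l * ξ 1 ω) ∂P ≤ ∫ _, (1:ℝ) ∂P := by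
            refine integral_mono ?_ (integrable_const 1) ?_
            · have h9 := hint
              simp only [Finset.Icc_self, Finset.sum_singleton] at h9
              exact h9
            · intro ω
              have h0 := hξnonneg 1 ω
              calc Real.exp (-l * ξ 1 ω) ≤ Real.exp 0 := by
                    apply Real.exp_le_exp.2; nlinarith
                _ = 1 := Real.exp_zero
        _ = 1 := by simp
    set β : ℝ := r * (1 - φl) with hβ
    have hβ0 : 0 ≤ β := by rw [hβ]; nlinarith
    rcases eq_or_lt_of_le hβ0 with hβeq | hβpos
    · rw [← hβeq] at *
      simpa using trivial_outer
    · have hβr : β ≤ r := by rw [hβ]; nlinarith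
      set θf : ℕ → ℝ := fun n => β - β/((n:ℝ)+2) with hθf
      have hθfpos : ∀ n, 0 < θf n := by
        intro n
        rw [hθf]
        have h2 : β/((n:ℝ)+2) < β := by
          rw [div_lt_iff₀ (by positivity)]
          nlinarith
        simpa using h2
      have hθfltβ : ∀ n, θf n < β := by
        intro n
        rw [hθf]
        have : 0 < β/((n:ℝ)+2) := by positivity
        simp only
        linarith
      have hρf : ∀ n, (r/(r - θf n)) * φl < 1 := by
        intro n
        have h1 : θf n < r := lt_of_lt_of_le (hθfltβ n) hβr
        rw [div_mul_eq_mul_div, div_lt_one (by linarith)]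
        have h2 : θf n < r * (1 - φl) := hθfltβ n
        nlinarith
      have htends : Tendsto (fun n : ℕ => ((-(θf n) : ℝ) : EReal)) atTop
          (nhds ((-β : ℝ) : EReal)) := by
        refine (continuous_coe_real_ereal.tendsto _).comp ?_
        have h1 : Tendsto (fun n : ℕ => ((n:ℝ)+2)) atTop atTop :=
          tendsto_atTop_add_const_right _ 2 tendsto_natCast_atTop_atTop
        have h2 : Tendsto (fun n : ℕ => β/((n:ℝ)+2)) atTop (nhds 0) := by
          simpa [div_eq_mul_inv] using h1.inv_tendsto_atTop.const_mul β
        have h3 : Tendsto (fun n : ℕ => θf n) atTop (nhds β) := by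
          rw [hθf]
          simpa using (tendsto_const_nhds (x := β)).sub h2
        simpa using h3.neg
      refine ge_of_tendsto' htends fun n => ?_
      exact key l hl (θf n) (hθfpos n) (lt_of_lt_of_le (hθfltβ n) hβr) (hρf n)
  -- final limit in l
  have hphi := phi_tendsto (P := P) hξmeas hξnonneg
  set p : ℝ := (P {ω | 0 < ξ 1 ω}).toReal with hp
  have htends : Tendsto (fun n : ℕ => ((-(r * (1 - mgf (ξ 1) P (-((n:ℝ)+1)))) : ℝ) : EReal))
      atTop (nhds ((-(r * p) : ℝ) : EReal)) := by
    refine (continuous_coe_real_ereal.tendsto _).comp ?_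
    have h1 : Tendsto (fun n : ℕ => -(r * (1 - mgf (ξ 1) P (-((n:ℝ)+1))))) atTop
        (nhds (-(r * (1 - (1 - p))))) := by
      exact (((tendsto_const_nhds (x := (1:ℝ))).sub hphi).const_mul r).neg
    have : -(r * (1 - (1 - p))) = -(r * p) := by ring
    rwa [this] at h1
  refine ge_of_tendsto' htends fun n => ?_
  exact theta_step ((n:ℝ)+1) (by positivity)
end

section
/- For every u > 0 and every real λ < Λ, limsup_{δ→0} limsup_{t→∞} (1/t)·log P(|S_t − u| ≤ δ) ≤ −( λu − r·E[e^{λξ_1} − 1] ); consequently limsup_{δ→0} limsup_{t→∞} (1/t)·log P(|S_t − u| ≤ δ) ≤ −sup_{λ < Λ}( λu − r·E[e^{λξ_1} − 1] ). -/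
open MeasureTheory ProbabilityTheory Filter Real Set

open scoped ENNReal

lemma exp_aux {r c : ℝ} (hr : 0 < r) (hrc : 0 < r + c) :
    Integrable (fun x => Real.exp (-(c * x))) (expMeasure r) ∧
      ∫ x, Real.exp (-(c * x)) ∂(expMeasure r) = r / (r + c) := by
  have hmeas : Measurable fun x : ℝ => Real.exp (-(c * x)) := by fun_prop
  have hpdfmeas : Measurable (gammaPDF 1 r) :=
    (measurable_gammaPDFReal 1 r).ennreal_ofReal
  have hpt : ∀ x : ℝ, gammaPDF 1 r x * ENNReal.ofReal (Real.exp (-(c * x)))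
      = ENNReal.ofReal (r / (r + c)) * gammaPDF 1 (r + c) x := by
    intro x
    have h1 : gammaPDF 1 r x = exponentialPDF r x := rfl
    have h2 : gammaPDF 1 (r + c) x = exponentialPDF (r + c) x := rfl
    rw [h1, h2, exponentialPDF_eq, exponentialPDF_eq]
    by_cases hx : 0 ≤ x
    · simp only [if_pos hx]
      rw [← ENNReal.ofReal_mul (by positivity), ← ENNReal.ofReal_mul (by positivity)]
      congr 1
      rw [mul_assoc, ← Real.exp_add, show -(r*x) + -(c*x) = -((r+c)*x) by ring]
      field_simp
    · simp [if_neg hx]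
  have hL : ∫⁻ x, ENNReal.ofReal (Real.exp (-(c * x))) ∂(expMeasure r)
      = ENNReal.ofReal (r / (r + c)) := by
    have : expMeasure r = volume.withDensity (gammaPDF 1 r) := rfl
    rw [this, lintegral_withDensity_eq_lintegral_mul volume hpdfmeas
      hmeas.ennreal_ofReal]
    simp only [Pi.mul_apply]
    calc ∫⁻ x, gammaPDF 1 r x * ENNReal.ofReal (Real.exp (-(c * x)))
        = ∫⁻ x, ENNReal.ofReal (r / (r + c)) * gammaPDF 1 (r + c) x := by
          simp_rw [hpt]
      _ = ENNReal.ofReal (r / (r + c)) * ∫⁻ x, gammaPDF 1 (r + c) x :=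
          lintegral_const_mul _ ((measurable_gammaPDFReal 1 (r+c)).ennreal_ofReal)
      _ = ENNReal.ofReal (r / (r + c)) := by
          rw [lintegral_gammaPDF_eq_one zero_lt_one hrc, mul_one]
  have hint : Integrable (fun x => Real.exp (-(c * x))) (expMeasure r) := by
    refine ⟨hmeas.aestronglyMeasurable, ?_⟩
    rw [hasFiniteIntegral_iff_ofReal (Eventually.of_forall fun x => (Real.exp_pos _).le)]
    rw [hL]
    exact ENNReal.ofReal_lt_top
  refine ⟨hint, ?_⟩
  rw [integral_eq_lintegral_of_nonneg_ae (Eventually.of_forall fun x => (Real.exp_pos _).le)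
    hmeas.aestronglyMeasurable, hL, ENNReal.toReal_ofReal (by positivity)]

lemma limsup_le_of_le_real {α : Type*} {l : Filter α} [l.NeBot] {f : α → EReal} {g : α → ℝ}
    {x : ℝ} (h : ∀ᶠ a in l, f a ≤ (g a : EReal)) (hg : Tendsto g l (nhds x)) :
    Filter.limsup f l ≤ (x : EReal) := by
  have hx : Filter.limsup (fun a => ((g a : EReal))) l = (x : EReal) :=
    (EReal.tendsto_coe.2 hg).limsup_eq
  exact le_trans (Filter.limsup_le_limsup h) hx.le

/-- **Local LDP upper bound at `u > 0` for the compound Poisson family `(S t)`.**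
For every `u > 0` and every `λ < Λ`,
`limsup_{δ → 0⁺} limsup_{t → ∞} (1/t) log P(|S t - u| ≤ δ) ≤ -(λ u - r E[exp (λ ξ₁) - 1])`;
consequently the iterated limsup is at most `-sup_{λ < Λ} (λ u - r E[exp (λ ξ₁) - 1])`. -/
theorem compoundPoisson_upper_bound_pos
    {Ω : Type*} [MeasurableSpace Ω] (P : Measure Ω) [IsProbabilityMeasure P]
    (ξ σ : ℕ → Ω → ℝ) (r : ℝ) (hr : 0 < r)
    (hξmeas : ∀ i, Measurable (ξ i))
    (hσmeas : ∀ i, Measurable (σ i))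
    (hξnonneg : ∀ i ω, 0 ≤ ξ i ω)
    (hξident : ∀ i, 1 ≤ i → IdentDistrib (ξ i) (ξ 1) P P)
    (hσexp : ∀ i, 1 ≤ i → P.map (σ i) = ProbabilityTheory.expMeasure r)
    (hindep : iIndepFun (Sum.elim ξ σ) P)
    (τ : ℕ → Ω → ℝ)
    (hτ : τ = fun (n : ℕ) (ω : Ω) => ∑ i ∈ Finset.Icc 1 n, σ i ω)
    (S : ℝ → Ω → ℝ)
    (hS : S = fun (t : ℝ) (ω : Ω) =>
      (1 / t) * ∑' n : ℕ, if 1 ≤ n ∧ τ n ω ≤ t then ξ n ω else 0)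
    (Λ : EReal)
    (hΛdef : Λ = sInf {x : EReal |
      ∃ l : ℝ, x = (l : EReal) ∧ 0 < l ∧
        ¬ Integrable (fun ω => Real.exp (l * ξ 1 ω)) P})
    (hΛpos : 0 < Λ)
    (hfin : ∀ l : ℝ, (l : EReal) < Λ →
      Integrable (fun ω => Real.exp (l * ξ 1 ω)) P)
    (u : ℝ) (hu : 0 < u) (l : ℝ) (hl : (l : EReal) < Λ) :
    Filter.limsup
      (fun δ : ℝ => Filter.limsup
        (fun t : ℝ => ((1 / t : ℝ) : EReal) *
          ENNReal.log (P {ω | |S t ω - u| ≤ δ})) atTop)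
      (nhdsWithin 0 (Ioi 0)) ≤
      ((-(l * u - r * ∫ ω, (Real.exp (l * ξ 1 ω) - 1) ∂P) : ℝ) : EReal) ∧
    Filter.limsup
      (fun δ : ℝ => Filter.limsup
        (fun t : ℝ => ((1 / t : ℝ) : EReal) *
          ENNReal.log (P {ω | |S t ω - u| ≤ δ})) atTop)
      (nhdsWithin 0 (Ioi 0)) ≤
      -(⨆ (l' : ℝ) (_ : (l' : EReal) < Λ),
        ((l' * u - r * ∫ ω, (Real.exp (l' * ξ 1 ω) - 1) ∂P : ℝ) : EReal)) := by
  classical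
  set L : EReal := Filter.limsup
      (fun δ : ℝ => Filter.limsup
        (fun t : ℝ => ((1 / t : ℝ) : EReal) *
          ENNReal.log (P {ω | |S t ω - u| ≤ δ})) atTop)
      (nhdsWithin 0 (Ioi 0)) with hLdef
  have main : ∀ l' : ℝ, (l' : EReal) < Λ →
      L ≤ ((-(l' * u - r * ∫ ω, (Real.exp (l' * ξ 1 ω) - 1) ∂P) : ℝ) : EReal) := by
    intro l' hl'
    have hMint : Integrable (fun ω => Real.exp (l' * ξ 1 ω)) P := hfin l' hl'
    set M : ℝ := ∫ ω, Real.exp (l' * ξ 1 ω) ∂P with hMdef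
    have hMpos : 0 < M := by
      rw [hMdef, integral_pos_iff_support_of_nonneg (fun ω => (Real.exp_pos _).le) hMint]
      have hsupp : Function.support (fun ω : Ω => Real.exp (l' * ξ 1 ω)) = Set.univ := by
        ext ω; simp [Function.mem_support, (Real.exp_pos _).ne']
      rw [hsupp]
      simp
    have hInt1 : ∫ ω, (Real.exp (l' * ξ 1 ω) - 1) ∂P = M - 1 := by
      rw [integral_sub hMint (integrable_const 1), integral_const]
      simp [hMdef]
    rw [hInt1]
    -- per-index integrability facts
    have hξe : ∀ n, 1 ≤ n → Integrable (fun ω => Real.exp (l' * ξ n ω)) P ∧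
        ∫ ω, Real.exp (l' * ξ n ω) ∂P = M := by
      intro n hn
      have hid : IdentDistrib (fun ω => Real.exp (l' * ξ n ω))
          (fun ω => Real.exp (l' * ξ 1 ω)) P P :=
        (hξident n hn).comp (show Measurable fun x : ℝ => Real.exp (l' * x) by fun_prop)
      exact ⟨hid.integrable_iff.2 hMint, hid.integral_eq⟩
    have hσe : ∀ (c : ℝ), 0 < r + c → ∀ n : ℕ, 1 ≤ n →
        Integrable (fun ω => Real.exp (-(c * σ n ω))) P ∧
        ∫ ω, Real.exp (-(c * σ n ω)) ∂P = r / (r + c) := by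
      intro c hrc n hn
      obtain ⟨hi, he⟩ := exp_aux hr hrc
      rw [← hσexp n hn] at hi he
      have hmeas : AEStronglyMeasurable (fun x : ℝ => Real.exp (-(c * x))) (P.map (σ n)) :=
        (Measurable.aestronglyMeasurable (by fun_prop))
      constructor
      · exact (integrable_map_measure hmeas (hσmeas n).aemeasurable).1 hi
      · rw [← he, integral_map (hσmeas n).aemeasurable hmeas]
    -- the independent family Y c
    set Y : ℝ → (ℕ ⊕ ℕ) → Ω → ℝ := fun c j =>
      (Sum.elim (fun _ : ℕ => fun x : ℝ => l' * x) (fun _ : ℕ => fun x : ℝ => -(c * x)) j) ∘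
        (Sum.elim ξ σ j) with hYdef
    have hYinl : ∀ c n, Y c (Sum.inl n) = fun ω => l' * ξ n ω := fun c n => rfl
    have hYinr : ∀ c n, Y c (Sum.inr n) = fun ω => -(c * σ n ω) := fun c n => rfl
    have hYmeas : ∀ c j, Measurable (Y c j) := by
      rintro c (n | n)
      · rw [hYinl]; exact (hξmeas n).const_mul l'
      · rw [hYinr]; exact ((hσmeas n).const_mul c).neg
    have hYindep : ∀ c, iIndepFun (Y c) P := by
      intro c
      rw [hYdef]
      refine hindep.comp _ ?_
      rintro (n | n)
      · exact measurable_const_mul l'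
      · exact (measurable_const_mul c).neg
    have hWsum : ∀ (c : ℝ) (a b : ℕ) (ω : Ω),
        (∑ j ∈ (Finset.Icc 1 a).disjSum (Finset.Icc 1 b), Y c j ω)
          = (∑ n ∈ Finset.Icc 1 a, l' * ξ n ω) - c * τ b ω := by
      intro c a b ω
      rw [Finset.sum_disjSum, hτ]
      simp only [hYinl, hYinr]
      rw [Finset.mul_sum, sub_eq_add_neg, ← Finset.sum_neg_distrib]
    have hEV : ∀ (c : ℝ), 0 < r + c → ∀ a b : ℕ,
        Integrable (fun ω => Real.exp ((∑ n ∈ Finset.Icc 1 a, l' * ξ n ω) - c * τ b ω)) P ∧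
        ∫ ω, Real.exp ((∑ n ∈ Finset.Icc 1 a, l' * ξ n ω) - c * τ b ω) ∂P
          = M ^ a * (r / (r + c)) ^ b := by
      intro c hrc a b
      set s : Finset (ℕ ⊕ ℕ) := (Finset.Icc 1 a).disjSum (Finset.Icc 1 b) with hs
      have hint : ∀ j ∈ s, Integrable (fun ω => Real.exp (1 * Y c j ω)) P := by
        intro j hj
        simp only [one_mul]
        rcases j with n | n
        · rw [hYinl]
          exact (hξe n (Finset.mem_Icc.1 (Finset.inl_mem_disjSum.1 hj)).1).1
        · rw [hYinr]
          exact (hσe c hrc n (Finset.mem_Icc.1 (Finset.inr_mem_disjSum.1 hj)).1).1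
      have hIntegrable := (hYindep c).integrable_exp_mul_sum (hYmeas c) (s := s) hint
      have happ : (fun ω => Real.exp (1 * (∑ j ∈ s, Y c j) ω))
          = fun ω => Real.exp ((∑ n ∈ Finset.Icc 1 a, l' * ξ n ω) - c * τ b ω) := by
        funext ω
        rw [one_mul, Finset.sum_apply, hWsum]
      constructor
      · exact happ ▸ hIntegrable
      · have hmgf := (hYindep c).mgf_sum (hYmeas c) (t := 1) s
        have h1 : mgf (∑ j ∈ s, Y c j) P 1
            = ∫ ω, Real.exp ((∑ n ∈ Finset.Icc 1 a, l' * ξ n ω) - c * τ b ω) ∂P := by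
          rw [mgf]
          exact integral_congr_ae (Eventually.of_forall fun ω => congrFun happ ω)
        rw [← h1, hmgf, hs, Finset.prod_disjSum]
        have hfl : ∀ n ∈ Finset.Icc 1 a, mgf (Y c (Sum.inl n)) P 1 = M := by
          intro n hn
          rw [mgf, hYinl]
          simp only [one_mul]
          exact (hξe n (Finset.mem_Icc.1 hn).1).2
        have hfr : ∀ n ∈ Finset.Icc 1 b, mgf (Y c (Sum.inr n)) P 1 = r / (r + c) := by
          intro n hn
          rw [mgf, hYinr]
          simp only [one_mul]
          exact (hσe c hrc n (Finset.mem_Icc.1 hn).1).2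
        rw [Finset.prod_congr rfl hfl, Finset.prod_congr rfl hfr,
          Finset.prod_const, Finset.prod_const, Nat.card_Icc, Nat.card_Icc]
        simp
    -- almost sure nonnegativity of σ
    have hσ0ae : ∀ᵐ ω ∂P, ∀ n : ℕ, 1 ≤ n → 0 ≤ σ n ω := by
      rw [ae_all_iff]
      intro n
      by_cases hn : 1 ≤ n
      · have h0 : P {ω | σ n ω < 0} = 0 := by
          have hpre : {ω | σ n ω < 0} = σ n ⁻¹' (Iio 0) := rfl
          rw [hpre, ← Measure.map_apply (hσmeas n) measurableSet_Iio, hσexp n hn]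
          show (volume.withDensity (gammaPDF 1 r)) (Iio 0) = 0
          rw [withDensity_apply _ measurableSet_Iio]
          exact lintegral_gammaPDF_of_nonpos le_rfl
        rw [ae_iff]
        convert h0 using 2
        ext ω
        simp [hn, not_le]
      · filter_upwards with ω h
        exact absurd h hn
    -- a.s. escape of τ
    have hBt : ∀ t : ℝ, ∀ᵐ ω ∂P, ∃ n : ℕ, 1 ≤ n ∧ t < τ n ω := by
      intro t
      have hρ1 : (0:ℝ) < r + 1 := by linarith
      have hρlt : r / (r + 1) < 1 := by
        rw [div_lt_one hρ1]; linarith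
      have hρ0 : (0:ℝ) ≤ r / (r + 1) := by positivity
      have hkey : ∀ n : ℕ, P {ω | ∀ m : ℕ, 1 ≤ m → τ m ω ≤ t}
          ≤ ENNReal.ofReal (Real.exp t * (r / (r+1)) ^ (n+1)) := by
        intro n
        obtain ⟨hi, he⟩ := hEV 1 hρ1 0 (n+1)
        have hsub : {ω | ∀ m : ℕ, 1 ≤ m → τ m ω ≤ t} ⊆
            {ω | ENNReal.ofReal (Real.exp (-t)) ≤ ENNReal.ofReal
              (Real.exp ((∑ m ∈ Finset.Icc 1 0, l' * ξ m ω) - 1 * τ (n+1) ω))} := by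
          intro ω hω
          have h1 : τ (n+1) ω ≤ t := hω (n+1) (Nat.succ_le_succ (Nat.zero_le n))
          have h2 : -t ≤ (∑ m ∈ Finset.Icc 1 0, l' * ξ m ω) - 1 * τ (n+1) ω := by
            simp only [show Finset.Icc 1 0 = (∅ : Finset ℕ) by rfl, Finset.sum_empty, one_mul]
            linarith
          exact ENNReal.ofReal_le_ofReal (Real.exp_le_exp.2 h2)
        have hfmeas : Measurable (fun ω => ENNReal.ofReal
            (Real.exp ((∑ m ∈ Finset.Icc 1 0, l' * ξ m ω) - 1 * τ (n+1) ω))) := by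
          apply Measurable.ennreal_ofReal
          apply Measurable.exp
          apply Measurable.sub
          · exact Finset.measurable_sum _ (fun i _ => (hξmeas i).const_mul l')
          · rw [hτ]
            exact (Finset.measurable_sum _ (fun i _ => hσmeas i)).const_mul 1
        have hmark := mul_meas_ge_le_lintegral₀ (μ := P) hfmeas.aemeasurable (ENNReal.ofReal (Real.exp (-t)))
        have hlin : ∫⁻ ω, ENNReal.ofReal
            (Real.exp ((∑ m ∈ Finset.Icc 1 0, l' * ξ m ω) - 1 * τ (n+1) ω)) ∂P
            = ENNReal.ofReal ((r / (r + 1)) ^ (n+1)) := by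
          rw [← ofReal_integral_eq_lintegral_ofReal hi
            (Eventually.of_forall fun ω => (Real.exp_pos _).le), he]
          simp
        rw [hlin] at hmark
        have ha0 : ENNReal.ofReal (Real.exp (-t)) ≠ 0 :=
          ne_of_gt (ENNReal.ofReal_pos.2 (Real.exp_pos _))
        have h2 := mul_le_mul_right hmark (ENNReal.ofReal (Real.exp (-t)))⁻¹
        rw [← mul_assoc, ENNReal.inv_mul_cancel ha0 ENNReal.ofReal_ne_top, one_mul] at h2
        refine le_trans (measure_mono hsub) (le_trans h2 ?_)
        rw [← ENNReal.ofReal_inv_of_pos (Real.exp_pos _), ← ENNReal.ofReal_mul (by positivity)]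
        apply ENNReal.ofReal_le_ofReal
        rw [← Real.exp_neg, neg_neg]
      have htend : Tendsto (fun n : ℕ => ENNReal.ofReal (Real.exp t * (r/(r+1))^(n+1)))
          atTop (nhds 0) := by
        rw [← ENNReal.ofReal_zero]
        apply ENNReal.tendsto_ofReal
        have h1 : Tendsto (fun n : ℕ => (r/(r+1))^(n+1)) atTop (nhds 0) :=
          (tendsto_pow_atTop_nhds_zero_of_lt_one hρ0 hρlt).comp (tendsto_add_atTop_nat 1)
        simpa using h1.const_mul (Real.exp t)
      have h0 : P {ω | ∀ m : ℕ, 1 ≤ m → τ m ω ≤ t} = 0 :=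
        le_antisymm (ge_of_tendsto' htend hkey) (by positivity)
      rw [ae_iff]
      convert h0 using 2
      ext ω
      simp only [Set.mem_setOf_eq, not_exists, not_and, not_lt]
    -- the key bound for each admissible c
    have key : ∀ c : ℝ, r * (M - 1) < c → L ≤ ((-(l' * u) + c : ℝ) : EReal) := by
      intro c hc
      have hrc : 0 < r + c := by nlinarith [mul_pos hr hMpos]
      have hρpos : 0 < r / (r + c) := div_pos hr hrc
      set q : ℝ := M * (r / (r + c)) with hqdef
      have hq0 : 0 ≤ q := by positivity
      have hq1 : q < 1 := by
        rw [hqdef, ← mul_div_assoc, div_lt_one hrc]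
        nlinarith
      set K : ℝ := (1 + r / (r + c)) * (1 - q)⁻¹ with hKdef
      have hKpos : 0 < K := by
        have h1q : 0 < 1 - q := by linarith
        positivity
      have hτmeas : ∀ b : ℕ, Measurable (τ b) := by
        intro b; rw [hτ]; exact Finset.measurable_sum _ (fun i _ => hσmeas i)
      have hWmeas : ∀ a b : ℕ,
          Measurable (fun ω => (∑ n ∈ Finset.Icc 1 a, l' * ξ n ω) - c * τ b ω) := by
        intro a b
        exact (Finset.measurable_sum _ (fun n _ => (hξmeas n).const_mul l')).sub
          ((hτmeas b).const_mul c)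
      set g : Ω → ℝ≥0∞ := fun ω => ∑' N : ℕ,
        (ENNReal.ofReal (Real.exp ((∑ n ∈ Finset.Icc 1 N, l' * ξ n ω) - c * τ N ω)) +
         ENNReal.ofReal (Real.exp ((∑ n ∈ Finset.Icc 1 N, l' * ξ n ω) - c * τ (N+1) ω)))
        with hgdef
      have hgmeas : Measurable g := by
        apply Measurable.ennreal_tsum
        intro N
        exact ((hWmeas N N).exp.ennreal_ofReal.add (hWmeas N (N+1)).exp.ennreal_ofReal)
      have hglint : ∫⁻ ω, g ω ∂P = ENNReal.ofReal K := by
        rw [hgdef]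
        rw [lintegral_tsum (f := fun N ω =>
          ENNReal.ofReal (Real.exp ((∑ n ∈ Finset.Icc 1 N, l' * ξ n ω) - c * τ N ω)) +
          ENNReal.ofReal (Real.exp ((∑ n ∈ Finset.Icc 1 N, l' * ξ n ω) - c * τ (N+1) ω))) (fun N =>
          ((hWmeas N N).exp.ennreal_ofReal.add (hWmeas N (N+1)).exp.ennreal_ofReal).aemeasurable)]
        have hterm : ∀ N : ℕ,
            ∫⁻ ω, (ENNReal.ofReal (Real.exp ((∑ n ∈ Finset.Icc 1 N, l' * ξ n ω) - c * τ N ω)) +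
              ENNReal.ofReal (Real.exp ((∑ n ∈ Finset.Icc 1 N, l' * ξ n ω) - c * τ (N+1) ω))) ∂P
            = ENNReal.ofReal q ^ N + ENNReal.ofReal (r / (r+c)) * ENNReal.ofReal q ^ N := by
          intro N
          rw [lintegral_add_left ((hWmeas N N).exp.ennreal_ofReal)]
          rw [← ofReal_integral_eq_lintegral_ofReal (hEV c hrc N N).1
            (Eventually.of_forall fun ω => (Real.exp_pos _).le), (hEV c hrc N N).2]
          rw [← ofReal_integral_eq_lintegral_ofReal (hEV c hrc N (N+1)).1
            (Eventually.of_forall fun ω => (Real.exp_pos _).le), (hEV c hrc N (N+1)).2]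
          rw [show M^N * (r/(r+c))^N = q^N by rw [hqdef, mul_pow],
            show M^N * (r/(r+c))^(N+1) = (r/(r+c)) * q^N by rw [hqdef, mul_pow, pow_succ]; ring]
          rw [ENNReal.ofReal_pow hq0, ENNReal.ofReal_mul hρpos.le, ENNReal.ofReal_pow hq0]
        rw [tsum_congr hterm]
        rw [ENNReal.tsum_add, ENNReal.tsum_geometric, ENNReal.tsum_mul_left,
          ENNReal.tsum_geometric]
        have h1q : (1:ℝ≥0∞) - ENNReal.ofReal q = ENNReal.ofReal (1 - q) := by
          rw [ENNReal.ofReal_sub 1 hq0, ENNReal.ofReal_one]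
        rw [h1q, ← ENNReal.ofReal_inv_of_pos (by linarith : (0:ℝ) < 1 - q)]
        have h1q' : (0:ℝ) < 1 - q := by linarith
        rw [← ENNReal.ofReal_mul hρpos.le,
          ← ENNReal.ofReal_add (le_of_lt (inv_pos.2 h1q'))
            (mul_nonneg hρpos.le (inv_nonneg.2 h1q'.le)), hKdef]
        congr 1
        ring
      -- the per (t, δ) bound
      have hBbound : ∀ t : ℝ, 0 < t → ∀ δ : ℝ, 0 < δ →
          P {ω | |S t ω - u| ≤ δ}
            ≤ ENNReal.ofReal (Real.exp (-(t * (l' * u - |l'| * δ)) + c * t) * K) := by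
        intro t ht δ hδ
        set a : ℝ := Real.exp (t * (l' * u - |l'| * δ) - c * t) with hadef
        have hapos : 0 < a := Real.exp_pos _
        have hpoint : ∀ᵐ ω ∂P, ω ∈ {ω | |S t ω - u| ≤ δ} → ENNReal.ofReal a ≤ g ω := by
          filter_upwards [hσ0ae, hBt t] with ω hσ0 hex hE
          have hτm : ∀ m n : ℕ, m ≤ n → τ m ω ≤ τ n ω := by
            intro m n hmn
            rw [hτ]
            exact Finset.sum_le_sum_of_subset_of_nonneg
              (Finset.Icc_subset_Icc_right hmn) (fun i hi _ => hσ0 i (Finset.mem_Icc.1 hi).1)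
          obtain ⟨m, hm1, hmt⟩ := hex
          have hfin' : ∀ n : ℕ, 1 ≤ n → τ n ω ≤ t → n < m := by
            intro n h1 h2
            by_contra hge
            push_neg at hge
            exact absurd (le_trans (hτm m n hge) h2) (not_le.2 hmt)
          set F : Finset ℕ := (Finset.Ico 1 m).filter (fun n => τ n ω ≤ t) with hF
          have hmemF : ∀ n : ℕ, 1 ≤ n → τ n ω ≤ t → n ∈ F := by
            intro n h1 h2
            rw [hF, Finset.mem_filter, Finset.mem_Ico]
            exact ⟨⟨h1, hfin' n h1 h2⟩, h2⟩
          have hmemF' : ∀ n : ℕ, n ∈ F → 1 ≤ n ∧ τ n ω ≤ t := by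
            intro n hn
            rw [hF, Finset.mem_filter, Finset.mem_Ico] at hn
            exact ⟨hn.1.1, hn.2⟩
          have hex2 : ∃ N : ℕ, ∀ n : ℕ, (1 ≤ n ∧ τ n ω ≤ t) ↔ n ∈ Finset.Icc 1 N := by
            by_cases hne : F.Nonempty
            · refine ⟨F.max' hne, fun n => ⟨fun hn => ?_, fun hn => ?_⟩⟩
              · obtain ⟨h1, h2⟩ := hn
                exact Finset.mem_Icc.2 ⟨h1, F.le_max' n (hmemF n h1 h2)⟩
              · obtain ⟨h1, h2⟩ := Finset.mem_Icc.1 hn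
                have hNmem := F.max'_mem hne
                have hNt : τ (F.max' hne) ω ≤ t := (hmemF' _ hNmem).2
                exact ⟨h1, le_trans (hτm n _ h2) hNt⟩
            · refine ⟨0, fun n => ⟨fun hn => ?_, fun hn => ?_⟩⟩
              · obtain ⟨h1, h2⟩ := hn
                exact absurd (hmemF n h1 h2)
                  (by rw [Finset.not_nonempty_iff_eq_empty.1 hne]; exact Finset.notMem_empty n)
              · exact absurd (Finset.mem_Icc.1 hn) (by omega)
          obtain ⟨N, hA⟩ := hex2
          have htsum : (∑' n : ℕ, if 1 ≤ n ∧ τ n ω ≤ t then ξ n ω else 0)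
              = ∑ n ∈ Finset.Icc 1 N, ξ n ω := by
            have hfn : (fun n : ℕ => if 1 ≤ n ∧ τ n ω ≤ t then ξ n ω else 0)
                = fun n => if n ∈ Finset.Icc 1 N then ξ n ω else 0 := by
              funext n
              exact if_congr (hA n) rfl rfl
            rw [hfn, tsum_eq_sum (fun n hn => if_neg hn)]
            exact Finset.sum_congr rfl (fun n hn => if_pos hn)
          have hStval : t * S t ω = ∑ n ∈ Finset.Icc 1 N, ξ n ω := by
            rw [hS]
            simp only
            rw [← mul_assoc, mul_one_div, div_self (ne_of_gt ht), one_mul, htsum]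
          have hτNt : τ N ω ≤ t := by
            rcases Nat.eq_zero_or_pos N with h0 | hpos
            · rw [h0, hτ]
              simp only [show Finset.Icc 1 0 = (∅ : Finset ℕ) by rfl, Finset.sum_empty]
              exact ht.le
            · exact ((hA N).2 (Finset.mem_Icc.2 ⟨hpos, le_refl N⟩)).2
          have hτN1t : t ≤ τ (N+1) ω := by
            by_contra hlt
            push_neg at hlt
            have := (hA (N+1)).1 ⟨Nat.succ_le_succ (Nat.zero_le N), hlt.le⟩
            have h2 := (Finset.mem_Icc.1 this).2
            omega
          have hE' : |S t ω - u| ≤ δ := hE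
          have hlow : t * (l' * u - |l'| * δ) ≤ ∑ n ∈ Finset.Icc 1 N, l' * ξ n ω := by
            have h1 : |l' * S t ω - l' * u| ≤ |l'| * δ := by
              rw [← mul_sub, abs_mul]
              exact mul_le_mul_of_nonneg_left hE' (abs_nonneg l')
            have h2 : l' * u - |l'| * δ ≤ l' * S t ω := by
              have := (abs_le.1 h1).1; linarith
            calc t * (l' * u - |l'| * δ) ≤ t * (l' * S t ω) :=
                  mul_le_mul_of_nonneg_left h2 ht.le
              _ = l' * (t * S t ω) := by ring
              _ = ∑ n ∈ Finset.Icc 1 N, l' * ξ n ω := by rw [hStval, Finset.mul_sum]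
          rcases le_or_gt 0 c with hc0 | hc0
          · have hWlow : t * (l' * u - |l'| * δ) - c * t
                ≤ (∑ n ∈ Finset.Icc 1 N, l' * ξ n ω) - c * τ N ω := by
              have hcc : c * τ N ω ≤ c * t := mul_le_mul_of_nonneg_left hτNt hc0
              linarith
            have step1 : ENNReal.ofReal a ≤ ENNReal.ofReal
                (Real.exp ((∑ n ∈ Finset.Icc 1 N, l' * ξ n ω) - c * τ N ω)) := by
              rw [hadef]
              exact ENNReal.ofReal_le_ofReal (Real.exp_le_exp.2 hWlow)
            exact le_trans (le_trans step1 le_self_add) (ENNReal.le_tsum N)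
          · have hWlow : t * (l' * u - |l'| * δ) - c * t
                ≤ (∑ n ∈ Finset.Icc 1 N, l' * ξ n ω) - c * τ (N+1) ω := by
              have hcc : c * τ (N+1) ω ≤ c * t := mul_le_mul_of_nonpos_left hτN1t hc0.le
              linarith
            have step1 : ENNReal.ofReal a ≤ ENNReal.ofReal
                (Real.exp ((∑ n ∈ Finset.Icc 1 N, l' * ξ n ω) - c * τ (N+1) ω)) := by
              rw [hadef]
              exact ENNReal.ofReal_le_ofReal (Real.exp_le_exp.2 hWlow)
            exact le_trans (le_trans step1 le_add_self) (ENNReal.le_tsum N)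
        have hset : P {ω | |S t ω - u| ≤ δ} ≤ P {ω | ENNReal.ofReal a ≤ g ω} :=
          measure_mono_ae hpoint
        have hmark := mul_meas_ge_le_lintegral₀ (μ := P) hgmeas.aemeasurable (ENNReal.ofReal a)
        rw [hglint] at hmark
        have ha0 : ENNReal.ofReal a ≠ 0 := ne_of_gt (ENNReal.ofReal_pos.2 hapos)
        have h2 := mul_le_mul_right hmark (ENNReal.ofReal a)⁻¹
        rw [← mul_assoc, ENNReal.inv_mul_cancel ha0 ENNReal.ofReal_ne_top, one_mul] at h2
        refine le_trans hset (le_trans h2 ?_)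
        rw [← ENNReal.ofReal_inv_of_pos hapos, ← ENNReal.ofReal_mul (by positivity)]
        apply ENNReal.ofReal_le_ofReal
        rw [hadef, ← Real.exp_neg]
        have : -(t * (l' * u - |l'| * δ) - c * t) = -(t * (l' * u - |l'| * δ)) + c * t := by ring
        rw [this]
      -- inner limsup bound
      have hinner : ∀ δ : ℝ, 0 < δ →
          Filter.limsup (fun t : ℝ => ((1 / t : ℝ) : EReal) *
            ENNReal.log (P {ω | |S t ω - u| ≤ δ})) atTop
          ≤ ((-(l' * u - |l'| * δ) + c : ℝ) : EReal) := by
        intro δ hδ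
        apply limsup_le_of_le_real
          (g := fun t : ℝ => (1/t) * (-(t * (l' * u - |l'| * δ)) + c * t + Real.log K))
        · filter_upwards [eventually_gt_atTop (0:ℝ)] with t ht
          have hlog : ENNReal.log (P {ω | |S t ω - u| ≤ δ})
              ≤ ((-(t * (l' * u - |l'| * δ)) + c * t + Real.log K : ℝ) : EReal) := by
            have hstep := ENNReal.log_le_log_iff.mpr (hBbound t ht δ hδ)
            rw [ENNReal.log_ofReal_of_pos (by positivity)] at hstep
            rw [Real.log_mul (Real.exp_ne_zero _) (ne_of_gt hKpos), Real.log_exp] at hstep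
            exact hstep
          calc ((1 / t : ℝ) : EReal) * ENNReal.log (P {ω | |S t ω - u| ≤ δ})
              ≤ ((1 / t : ℝ) : EReal) *
                ((-(t * (l' * u - |l'| * δ)) + c * t + Real.log K : ℝ) : EReal) :=
                mul_le_mul_of_nonneg_left hlog (by
                  rw [show ((0:EReal)) = ((0:ℝ) : EReal) by rfl, EReal.coe_le_coe_iff]
                  positivity)
            _ = (((1/t) * (-(t * (l' * u - |l'| * δ)) + c * t + Real.log K) : ℝ) : EReal) :=
                (EReal.coe_mul _ _).symm
        · have hev : ∀ᶠ t : ℝ in atTop,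
              (1/t) * (-(t * (l' * u - |l'| * δ)) + c * t + Real.log K)
                = (-(l' * u - |l'| * δ) + c) + (Real.log K) / t := by
            filter_upwards [eventually_ne_atTop (0:ℝ)] with t ht
            field_simp
          rw [tendsto_congr' hev]
          have h1 : Tendsto (fun t : ℝ => Real.log K / t) atTop (nhds 0) :=
            Tendsto.div_atTop tendsto_const_nhds tendsto_id
          simpa using tendsto_const_nhds.add h1
      -- outer limsup
      rw [hLdef]
      refine limsup_le_of_le_real (g := fun δ : ℝ => -(l' * u - |l'| * δ) + c) ?_ ?_
      · filter_upwards [self_mem_nhdsWithin] with δ hδ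
        exact hinner δ hδ
      · have hcont : Tendsto (fun δ : ℝ => -(l' * u - |l'| * δ) + c) (nhds 0)
            (nhds (-(l' * u - |l'| * 0) + c)) := by
          apply Continuous.tendsto
          fun_prop
        have h2 := hcont.mono_left (nhdsWithin_le_nhds (s := Ioi (0:ℝ)))
        simpa using h2
    -- conclude main by letting c ↓ r (M - 1)
    by_contra hcon
    push_neg at hcon
    obtain ⟨z, hz1, hz2⟩ := EReal.exists_between_coe_real hcon
    have hz1' : -(l' * u - r * (M - 1)) < z := EReal.coe_lt_coe_iff.1 hz1
    have hkey := key (z + l' * u) (by linarith)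
    have heq : (-(l' * u) + (z + l' * u) : ℝ) = z := by ring
    rw [heq] at hkey
    exact absurd hz2 (not_lt.2 hkey)
  constructor
  · exact main l hl
  · have h2 : (⨆ (l' : ℝ) (_ : (l' : EReal) < Λ),
        ((l' * u - r * ∫ ω, (Real.exp (l' * ξ 1 ω) - 1) ∂P : ℝ) : EReal)) ≤ -L := by
      refine iSup₂_le fun l' hl' => ?_
      have hm := main l' hl'
      rw [EReal.coe_neg] at hm
      exact EReal.le_neg_of_le_neg hm
    exact EReal.le_neg_of_le_neg h2
end
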